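/- Define g(t) = (2/e) · (e^{-2t}(t+1) + t - 1)/t for t > 0. Then for every real κ > 0 and β > 1 with t₀ := κ/(β+1) ∈ (0,1), one has ∫₀¹ t^β (1-t) e^{κ t} dt > (e^{κ}/κ²) · g(t₀). -/

import Mathlib

noncomputable def g (t : ℝ) : ℝ :=
  (2 / Real.exp 1) * (Real.exp (-2 * t) * (t + 1) + t - 1) / t

/-- Pointwise key bound: `(β+1)t - (β-1) ≤ e · t^β` for `t > 0`, `β > 1`. -/
lemma key_pointwise (β t : ℝ) (hβ : 1 < β) (ht : 0 < t) :
    (β + 1) * t - (β - 1) ≤ Real.exp 1 * t ^ β := by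
  have hlog : t - 1 ≤ t * Real.log t := by
    have h1 : Real.log t⁻¹ ≤ t⁻¹ - 1 := Real.log_le_sub_one_of_pos (by positivity)
    rw [Real.log_inv] at h1
    have h2 : 1 - t⁻¹ ≤ Real.log t := by linarith
    have := mul_le_mul_of_nonneg_left h2 ht.le
    calc t - 1 = t * (1 - t⁻¹) := by field_simp
    _ ≤ t * Real.log t := this
  have hrw : Real.exp 1 * t ^ β = t * Real.exp (1 + (β - 1) * Real.log t) := by
    have h5 : Real.exp (Real.log t + (1 + (β - 1) * Real.log t))
        = t * Real.exp (1 + (β - 1) * Real.log t) := by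
      rw [Real.exp_add, Real.exp_log ht]
    rw [Real.rpow_def_of_pos ht, ← Real.exp_add, ← h5]
    congr 1
    ring
  have hexp : 2 + (β - 1) * Real.log t ≤ Real.exp (1 + (β - 1) * Real.log t) := by
    have := Real.add_one_le_exp (1 + (β - 1) * Real.log t)
    linarith
  have h3 : t * (2 + (β - 1) * Real.log t) ≤ t * Real.exp (1 + (β - 1) * Real.log t) :=
    mul_le_mul_of_nonneg_left hexp ht.le
  have h4 : (β - 1) * (t - 1) ≤ (β - 1) * (t * Real.log t) :=
    mul_le_mul_of_nonneg_left hlog (by linarith)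
  rw [hrw]
  nlinarith [h3, h4]

set_option maxHeartbeats 1000000 in
theorem stmt_5 (κ β : ℝ) (hκ : 0 < κ) (hβ : 1 < β)
    (ht₀ : κ / (β + 1) ∈ Set.Ioo (0 : ℝ) 1) :
    (∫ t in (0:ℝ)..1, t ^ β * (1 - t) * Real.exp (κ * t)) >
      (Real.exp κ / κ ^ 2) * g (κ / (β + 1)) := by
  obtain ⟨ht₀0, ht₀1⟩ := ht₀
  have hb1 : (0:ℝ) < β + 1 := by linarith
  set a : ℝ := (β - 1) / (β + 1) with ha_def
  have ha0 : 0 < a := div_pos (by linarith) hb1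
  have ha1 : a < 1 := by rw [div_lt_one hb1]; linarith
  have hκ0 : κ ≠ 0 := ne_of_gt hκ
  -- coefficients of the antiderivative
  set A : ℝ := -(β + 1) / κ with hA
  set B : ℝ := (2 * β + 2 * (β + 1) / κ) / κ with hB
  set C : ℝ := (-(β - 1) - B) / κ with hC
  set F : ℝ → ℝ := fun t => Real.exp (κ * t) * (A * t ^ 2 + B * t + C) with hF
  -- continuity facts
  have hcont_pow : Continuous fun t : ℝ => t ^ β := by
    rw [continuous_iff_continuousAt]
    intro x
    exact Real.continuousAt_rpow_const x β (Or.inr (by linarith))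
  have hcont_f : Continuous fun t : ℝ => t ^ β * (1 - t) * Real.exp (κ * t) := by
    fun_prop
  have hcont_l : Continuous fun t : ℝ =>
      (Real.exp 1)⁻¹ * ((1 - t) * ((β + 1) * t - (β - 1)) * Real.exp (κ * t)) := by
    fun_prop
  have hcont_l' : Continuous fun t : ℝ =>
      (1 - t) * ((β + 1) * t - (β - 1)) * Real.exp (κ * t) := by fun_prop
  -- derivative of F
  have hderiv : ∀ t : ℝ, HasDerivAt F
      ((1 - t) * ((β + 1) * t - (β - 1)) * Real.exp (κ * t)) t := by
    intro t
    have h1 : HasDerivAt (fun t : ℝ => Real.exp (κ * t)) (κ * Real.exp (κ * t)) t := by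
      have := (Real.hasDerivAt_exp (κ * t)).comp t ((hasDerivAt_id t).const_mul κ)
      exact this.congr_deriv (by simp [mul_comm])
    have h2 : HasDerivAt (fun t : ℝ => A * t ^ 2 + B * t + C) (2 * A * t + B) t := by
      have h := (((hasDerivAt_pow 2 t).const_mul A).add ((hasDerivAt_id t).const_mul B)).add_const C
      refine h.congr_deriv ?_
      push_cast
      ring
    have h3 := h1.mul h2
    have heq : κ * Real.exp (κ * t) * (A * t ^ 2 + B * t + C)
        + Real.exp (κ * t) * (2 * A * t + B)
        = (1 - t) * ((β + 1) * t - (β - 1)) * Real.exp (κ * t) := by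
      rw [hC, hB, hA]
      field_simp
      ring
    rw [heq] at h3
    exact h3
  -- the integral over [a,1] of the lower bound
  have hint_eq : (∫ t in a..(1:ℝ), (1 - t) * ((β + 1) * t - (β - 1)) * Real.exp (κ * t))
      = F 1 - F a := by
    exact intervalIntegral.integral_eq_sub_of_hasDerivAt (fun t _ => hderiv t)
      (hcont_l'.intervalIntegrable _ _)
  -- split the integral
  have hsplit : (∫ t in (0:ℝ)..1, t ^ β * (1 - t) * Real.exp (κ * t))
      = (∫ t in (0:ℝ)..a, t ^ β * (1 - t) * Real.exp (κ * t))
      + ∫ t in a..(1:ℝ), t ^ β * (1 - t) * Real.exp (κ * t) :=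
    (intervalIntegral.integral_add_adjacent_intervals (hcont_f.intervalIntegrable _ _)
      (hcont_f.intervalIntegrable _ _)).symm
  -- strict positivity on [0,a]
  have hpos : 0 < ∫ t in (0:ℝ)..a, t ^ β * (1 - t) * Real.exp (κ * t) := by
    apply intervalIntegral.intervalIntegral_pos_of_pos_on (hcont_f.intervalIntegrable _ _) _ ha0
    intro x hx
    have hx0 : 0 < x := hx.1
    have hx1 : x < 1 := lt_trans hx.2 ha1
    have h1 : 0 < x ^ β := Real.rpow_pos_of_pos hx0 β
    have h2 : 0 < 1 - x := by linarith
    have h3 : 0 < Real.exp (κ * x) := Real.exp_pos _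
    positivity
  -- comparison on [a,1]
  have hmono : (∫ t in a..(1:ℝ),
        (Real.exp 1)⁻¹ * ((1 - t) * ((β + 1) * t - (β - 1)) * Real.exp (κ * t)))
      ≤ ∫ t in a..(1:ℝ), t ^ β * (1 - t) * Real.exp (κ * t) := by
    apply intervalIntegral.integral_mono_on ha1.le (hcont_l.intervalIntegrable _ _)
      (hcont_f.intervalIntegrable _ _)
    intro x hx
    have hx0 : 0 < x := lt_of_lt_of_le ha0 hx.1
    have hx1 : x ≤ 1 := hx.2
    have hkey := key_pointwise β x hβ hx0
    have he : (0:ℝ) < Real.exp 1 := Real.exp_pos 1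
    have hmul : ((β + 1) * x - (β - 1)) * ((1 - x) * Real.exp (κ * x))
        ≤ Real.exp 1 * x ^ β * ((1 - x) * Real.exp (κ * x)) := by
      apply mul_le_mul_of_nonneg_right hkey
      have h2 : 0 ≤ 1 - x := by linarith
      positivity
    rw [mul_comm (Real.exp 1)⁻¹ _, ← div_eq_mul_inv, div_le_iff₀ he]
    nlinarith [hmul]
  have hlow : (∫ t in a..(1:ℝ),
        (Real.exp 1)⁻¹ * ((1 - t) * ((β + 1) * t - (β - 1)) * Real.exp (κ * t)))
      = (Real.exp 1)⁻¹ * (F 1 - F a) := by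
    rw [intervalIntegral.integral_const_mul, hint_eq]
  -- algebraic identity: RHS = e⁻¹ (F 1 - F a)
  have halg : (Real.exp κ / κ ^ 2) * g (κ / (β + 1)) = (Real.exp 1)⁻¹ * (F 1 - F a) := by
    rw [g, hF]
    have hexp2 : Real.exp (-2 * (κ / (β + 1))) = Real.exp (κ * a) / Real.exp κ := by
      rw [← Real.exp_sub]
      congr 1
      rw [ha_def]
      field_simp
      ring
    rw [hexp2, hC, hB, hA, ha_def]
    have he : Real.exp 1 ≠ 0 := (Real.exp_pos 1).ne'
    have heκ : Real.exp κ ≠ 0 := (Real.exp_pos κ).ne'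
    have hb1' : β + 1 ≠ 0 := ne_of_gt hb1
    field_simp
    ring
  rw [hsplit, halg, ← hlow]
  have := lt_of_lt_of_le hpos (le_refl _)
  linarith [hmono, hpos]
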